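/- Let n ≥ 1, K > 0, and let u : ℝⁿ × (−∞,0) → ℝ be twice continuously differentiable, ℤⁿ-periodic in space, and satisfy the pointwise inequality (∂_t u − Δu)² ≤ K·(u² + |∇u|²). Then for every α ≥ K + 2 and all T₁ < T₂ < 0: ∫_{T₁}^{T₂} ∫_{[0,1]ⁿ} (u² + |∇u|²)·e^{−αt} dx dt ≤ ∫_{[0,1]ⁿ} u(x,T₁)²·e^{−αT₁} dx. -/

import Mathlib

/-- The `i`-th spatial partial derivative of `u : ℝⁿ × ℝ → ℝ`. -/
noncomputable def spatialPDeriv {n : ℕ} (i : Fin n) (u : (Fin n → ℝ) → ℝ → ℝ) :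
    (Fin n → ℝ) → ℝ → ℝ :=
  fun x t => deriv (fun s => u (Function.update x i s) t) (x i)

/-- The spatial Laplacian `Δu = ∑ᵢ ∂²u/∂xᵢ²` of `u : ℝⁿ × ℝ → ℝ`. -/
noncomputable def spatialLaplacian {n : ℕ} (u : (Fin n → ℝ) → ℝ → ℝ) :
    (Fin n → ℝ) → ℝ → ℝ :=
  fun x t => ∑ i : Fin n, spatialPDeriv i (spatialPDeriv i u) x t

/-- The squared norm `|∇u|² = ∑ᵢ (∂u/∂xᵢ)²` of the spatial gradient. -/
noncomputable def spatialGradSq {n : ℕ} (u : (Fin n → ℝ) → ℝ → ℝ) :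
    (Fin n → ℝ) → ℝ → ℝ :=
  fun x t => ∑ i : Fin n, (spatialPDeriv i u x t) ^ 2

/-- The time derivative `∂ₜu` of `u : ℝⁿ × ℝ → ℝ`. -/
noncomputable def timeDeriv {n : ℕ} (u : (Fin n → ℝ) → ℝ → ℝ) :
    (Fin n → ℝ) → ℝ → ℝ :=
  fun x t => deriv (fun s => u x s) t

open MeasureTheory Set

namespace CarlemanAux
variable {n : ℕ}

lemma update_eq_line (x : Fin n → ℝ) (i : Fin n) (s : ℝ) :
    Function.update x i s = x + (s - x i) • (Pi.single i 1 : Fin n → ℝ) := by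
  funext j
  rcases eq_or_ne j i with rfl | hj
  · simp
  · simp [Function.update_of_ne hj, Pi.single_eq_of_ne hj]

lemma hasDerivAt_update (x : Fin n → ℝ) (i : Fin n) (s₀ : ℝ) :
    HasDerivAt (fun s => Function.update x i s) (Pi.single i 1 : Fin n → ℝ) s₀ := by
  have h : HasDerivAt (fun s : ℝ => x + (s - x i) • (Pi.single i 1 : Fin n → ℝ))
      ((1:ℝ) • (Pi.single i 1 : Fin n → ℝ)) s₀ :=
    ((((hasDerivAt_id s₀).sub_const (x i)).smul_const _).const_add x)
  simpa [← update_eq_line] using h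

lemma hasDerivAt_lineX {W : ((Fin n → ℝ) × ℝ) → ℝ} {L : ((Fin n → ℝ) × ℝ) →L[ℝ] ℝ}
    {x : Fin n → ℝ} {t : ℝ} (hW : HasFDerivAt W L (x, t)) (i : Fin n) :
    HasDerivAt (fun s => W (Function.update x i s, t))
      (L ((Pi.single i 1 : Fin n → ℝ), (0:ℝ))) (x i) := by
  have h1 : HasDerivAt (fun s : ℝ => ((Function.update x i s : Fin n → ℝ), t))
      (((Pi.single i 1 : Fin n → ℝ), (0:ℝ))) (x i) :=
    (hasDerivAt_update x i (x i)).prodMk (hasDerivAt_const _ _)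
  have hW' : HasFDerivAt W L ((fun s : ℝ => ((Function.update x i s : Fin n → ℝ), t)) (x i)) := by
    simpa [Function.update_eq_self] using hW
  exact hW'.comp_hasDerivAt (x i) h1

lemma hasDerivAt_lineT {W : ((Fin n → ℝ) × ℝ) → ℝ} {L : ((Fin n → ℝ) × ℝ) →L[ℝ] ℝ}
    {x : Fin n → ℝ} {t : ℝ} (hW : HasFDerivAt W L (x, t)) :
    HasDerivAt (fun s => W (x, s)) (L ((0 : Fin n → ℝ), (1:ℝ))) t := by
  have h1 : HasDerivAt (fun s : ℝ => ((x : Fin n → ℝ), s)) (((0 : Fin n → ℝ), (1:ℝ))) t :=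
    (hasDerivAt_const _ _).prodMk (hasDerivAt_id _)
  exact hW.comp_hasDerivAt t h1

/-- The open domain. -/
def S (n : ℕ) : Set ((Fin n → ℝ) × ℝ) := Set.univ ×ˢ Set.Iio 0

lemma isOpen_S : IsOpen (S n) := isOpen_univ.prod isOpen_Iio

lemma mem_S {x : Fin n → ℝ} {t : ℝ} (ht : t < 0) : (x, t) ∈ S n := ⟨trivial, ht⟩

section
variable {u : (Fin n → ℝ) → ℝ → ℝ}
  (hu : ContDiffOn ℝ 2 (fun q : (Fin n → ℝ) × ℝ => u q.1 q.2) (Set.univ ×ˢ Set.Iio 0))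
include hu

/-- abbreviation for the joint function -/
noncomputable def UU (u : (Fin n → ℝ) → ℝ → ℝ) : ((Fin n → ℝ) × ℝ) → ℝ := fun q => u q.1 q.2

lemma hUc : ContDiffOn ℝ 2 (UU u) (S n) := hu

lemma hUdiff {x : Fin n → ℝ} {t : ℝ} (ht : t < 0) :
    HasFDerivAt (UU u) (fderiv ℝ (UU u) (x, t)) (x, t) :=
  (((hUc hu).differentiableOn (by norm_num)).differentiableAt
    (isOpen_S.mem_nhds (mem_S ht))).hasFDerivAt

/-- first-order spatial derivative as a function on the product space -/
noncomputable def G (u : (Fin n → ℝ) → ℝ → ℝ) (i : Fin n) : ((Fin n → ℝ) × ℝ) → ℝ :=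
  fun q => fderiv ℝ (UU u) q ((Pi.single i 1 : Fin n → ℝ), (0:ℝ))

noncomputable def GT (u : (Fin n → ℝ) → ℝ → ℝ) : ((Fin n → ℝ) × ℝ) → ℝ :=
  fun q => fderiv ℝ (UU u) q ((0 : Fin n → ℝ), (1:ℝ))

lemma hGsm (i : Fin n) : ContDiffOn ℝ 1 (G u i) (S n) :=
  ((hUc hu).fderiv_of_isOpen (m := 1) isOpen_S (by norm_num)).clm_apply contDiffOn_const

lemma hGTc : ContinuousOn (GT u) (S n) :=
  (((hUc hu).fderiv_of_isOpen (m := 1) isOpen_S (by norm_num)).continuousOn).clm_apply continuousOn_const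

lemma hGdiff (i : Fin n) {x : Fin n → ℝ} {t : ℝ} (ht : t < 0) :
    HasFDerivAt (G u i) (fderiv ℝ (G u i) (x, t)) (x, t) :=
  (((hGsm hu i).differentiableOn (by norm_num)).differentiableAt
    (isOpen_S.mem_nhds (mem_S ht))).hasFDerivAt

lemma hHc (i : Fin n) :
    ContinuousOn (fun q => fderiv ℝ (G u i) q ((Pi.single i 1 : Fin n → ℝ), (0:ℝ))) (S n) :=
  (((hGsm hu i).continuousOn_fderiv_of_isOpen isOpen_S le_rfl)).clm_apply continuousOn_const

lemma spatial_eq (i : Fin n) (x : Fin n → ℝ) {t : ℝ} (ht : t < 0) :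
    spatialPDeriv i u x t = G u i (x, t) :=
  (hasDerivAt_lineX (hUdiff hu ht) i).deriv

lemma time_eq (x : Fin n → ℝ) {t : ℝ} (ht : t < 0) :
    timeDeriv u x t = GT u (x, t) :=
  (hasDerivAt_lineT (hUdiff hu ht)).deriv

lemma spatial2_eq (i : Fin n) (x : Fin n → ℝ) {t : ℝ} (ht : t < 0) :
    spatialPDeriv i (spatialPDeriv i u) x t
      = fderiv ℝ (G u i) (x, t) ((Pi.single i 1 : Fin n → ℝ), (0:ℝ)) := by
  have hfun : (fun s => spatialPDeriv i u (Function.update x i s) t)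
      = fun s => G u i (Function.update x i s, t) := by
    funext s; exact spatial_eq hu i _ ht
  have h2 : deriv (fun s => G u i (Function.update x i s, t)) (x i)
      = fderiv ℝ (G u i) (x, t) ((Pi.single i 1 : Fin n → ℝ), (0:ℝ)) :=
    (hasDerivAt_lineX (hGdiff hu i ht) i).deriv
  rw [spatialPDeriv, hfun, h2]


section Periodic
variable (hper : ∀ (x : Fin n → ℝ) (t : ℝ), t < 0 → ∀ z : Fin n → ℤ,
      u (x + fun i => (z i : ℝ)) t = u x t)
include hper

omit hu hper in
lemma update_add (x w : Fin n → ℝ) (i : Fin n) (s : ℝ) :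
    Function.update (x + w) i s = Function.update x i (s - w i) + w := by
  funext j
  rcases eq_or_ne j i with rfl | hj
  · simp
  · simp [Function.update_of_ne hj]

omit hu in
lemma pd_periodic (i : Fin n) (x : Fin n → ℝ) {t : ℝ} (ht : t < 0) (z : Fin n → ℤ) :
    spatialPDeriv i u (x + fun j => (z j : ℝ)) t = spatialPDeriv i u x t := by
  have key : (fun s => u (Function.update (x + fun j => (z j : ℝ)) i s) t)
      = fun s => u (Function.update x i (s - (z i : ℝ))) t := by
    funext s
    rw [update_add, hper _ t ht z]
  have hx : (x + fun j => (z j : ℝ)) i = x i + (z i : ℝ) := rfl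
  rw [spatialPDeriv, key, hx, deriv_comp_sub_const (f := fun y => u (Function.update x i y) t), add_sub_cancel_right]
  rfl


omit hu hper in
lemma insertNth_one_shift {m : ℕ} (i : Fin (m+1)) (y : Fin m → ℝ) :
    i.insertNth (1:ℝ) y
      = i.insertNth (0:ℝ) y + fun j => (((Pi.single i 1 : Fin (m+1) → ℤ) j : ℤ) : ℝ) := by
  funext j
  rcases eq_or_ne j i with rfl | hj
  · simp
  · obtain ⟨k, rfl⟩ := Fin.exists_succAbove_eq hj
    simp [Pi.single_eq_of_ne (Fin.succAbove_ne i k)]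


/-- Integration by parts on the torus: `∫ (|∇u|² + u Δu) = 0`. -/
lemma ibp {m : ℕ} (hm : n = m + 1) {t : ℝ} (ht : t < 0) :
    ∫ x in Icc (0 : Fin n → ℝ) 1,
      (spatialGradSq u x t + u x t * spatialLaplacian u x t) = 0 := by
  subst hm
  -- the vector field
  set φ : Fin (m+1) → (Fin (m+1) → ℝ) → ℝ := fun i x => UU u (x, t) * G u i (x, t) with hφ
  have hVcd : ContDiff ℝ 1 (fun x : Fin (m+1) → ℝ => ((x, t) : (Fin (m+1) → ℝ) × ℝ)) :=
    contDiff_id.prodMk contDiff_const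
  have hφcd : ∀ i, ContDiff ℝ 1 (φ i) := by
    intro i
    have h1 : ContDiffOn ℝ 1 (fun q => UU u q * G u i q) (S (m+1)) :=
      ((hUc hu).of_le (by norm_num)).mul (hGsm hu i)
    have := h1.comp (s := univ) hVcd.contDiffOn (fun x _ => mem_S ht)
    exact contDiffOn_univ.mp this
  set f : (Fin (m+1) → ℝ) → (Fin (m+1) → ℝ) := fun x j => φ j x with hf
  have hfcd : ContDiff ℝ 1 f := contDiff_pi.2 hφcd
  set f' : (Fin (m+1) → ℝ) → ((Fin (m+1) → ℝ) →L[ℝ] (Fin (m+1) → ℝ)) :=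
    fun x => fderiv ℝ f x with hf'
  have Hd : ∀ x, HasFDerivAt f (f' x) x := fun x =>
    ((hfcd.differentiable (by norm_num)) x).hasFDerivAt
  have hproj : ∀ (x : Fin (m+1) → ℝ) (v : Fin (m+1) → ℝ) (i : Fin (m+1)),
      f' x v i = fderiv ℝ (φ i) x v := by
    intro x v i
    have : fderiv ℝ f x = ContinuousLinearMap.pi fun i => fderiv ℝ (φ i) x :=
      fderiv_pi (fun i => ((hφcd i).differentiable (by norm_num)) x)
    simp [hf', this]
  have hdiv : ∀ x : Fin (m+1) → ℝ, (∑ i, f' x (Pi.single i 1) i)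
      = spatialGradSq u x t + u x t * spatialLaplacian u x t := by
    intro x
    have hterm : ∀ i : Fin (m+1), f' x (Pi.single i 1) i
        = (spatialPDeriv i u x t) ^ 2
          + u x t * spatialPDeriv i (spatialPDeriv i u) x t := by
      intro i
      have hA := hasDerivAt_lineX (x := x) (hUdiff hu ht) i
      have hB := hasDerivAt_lineX (x := x) (hGdiff hu i ht) i
      have hAB := hA.fun_mul hB
      have hline : HasDerivAt (fun s => Function.update x i s)
          (Pi.single i 1 : Fin (m+1) → ℝ) (x i) := hasDerivAt_update x i (x i)
      have hφd : HasFDerivAt (φ i) (fderiv ℝ (φ i) x)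
          ((fun s : ℝ => Function.update x i s) (x i)) := by
        simpa [Function.update_eq_self] using
          (((hφcd i).differentiable (by norm_num)) x).hasFDerivAt
      have hC : HasDerivAt (fun s => φ i (Function.update x i s))
          (fderiv ℝ (φ i) x (Pi.single i 1)) (x i) :=
        hφd.comp_hasDerivAt (x i) hline
      have huniq : fderiv ℝ (φ i) x (Pi.single i 1)
          = G u i (x, t) * G u i (x, t)
            + UU u (x, t) * fderiv ℝ (G u i) (x, t) ((Pi.single i 1 : Fin (m+1) → ℝ), (0:ℝ)) := by
        have hAB' : HasDerivAt (fun s => φ i (Function.update x i s))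
            (G u i (x, t) * G u i (x, t)
              + UU u (x, t) * fderiv ℝ (G u i) (x, t)
                  ((Pi.single i 1 : Fin (m+1) → ℝ), (0:ℝ))) (x i) := by
          simp only [Function.update_eq_self] at hAB
          exact hAB
        exact hC.unique hAB'
      rw [hproj, huniq, spatial_eq hu i x ht, spatial2_eq hu i x ht]
      simp only [UU]
      ring
    rw [Finset.sum_congr rfl (fun i _ => hterm i), Finset.sum_add_distrib,
      spatialGradSq, spatialLaplacian, ← Finset.mul_sum]
  have hdivcont : Continuous (fun x : Fin (m+1) → ℝ => ∑ i, f' x (Pi.single i 1) i) := by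
    apply continuous_finset_sum
    intro i _
    exact (continuous_apply i).comp
      ((hfcd.continuous_fderiv (by norm_num)).clm_apply continuous_const)
  have hle : (0 : Fin (m+1) → ℝ) ≤ 1 := fun _ => zero_le_one
  have key := integral_divergence_of_hasFDerivAt_off_countable
    (a := (0 : Fin (m+1) → ℝ)) (b := (1 : Fin (m+1) → ℝ)) hle f f' ∅ countable_empty
    (hfcd.continuous.continuousOn) (fun x _ => Hd x)
    (ContinuousOn.integrableOn_compact isCompact_Icc hdivcont.continuousOn)
  have hforms : (fun x : Fin (m+1) → ℝ => ∑ i, f' x (Pi.single i 1) i)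
      = fun x => spatialGradSq u x t + u x t * spatialLaplacian u x t := funext hdiv
  rw [← hforms, key]
  apply Finset.sum_eq_zero
  intro i _
  have hEq : ∀ y : Fin m → ℝ,
      f (i.insertNth ((1 : Fin (m+1) → ℝ) i) y) i
        = f (i.insertNth ((0 : Fin (m+1) → ℝ) i) y) i := by
    intro y
    have hz : i.insertNth ((1 : Fin (m+1) → ℝ) i) y
        = i.insertNth ((0 : Fin (m+1) → ℝ) i) y
          + fun j => (((Pi.single i 1 : Fin (m+1) → ℤ) j : ℤ) : ℝ) :=
      insertNth_one_shift i y
    show φ i _ = φ i _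
    rw [hφ]
    simp only
    rw [hz]
    have hU : UU u ((i.insertNth ((0 : Fin (m+1) → ℝ) i) y
          + fun j => (((Pi.single i 1 : Fin (m+1) → ℤ) j : ℤ) : ℝ)), t)
        = UU u (i.insertNth ((0 : Fin (m+1) → ℝ) i) y, t) := hper _ t ht _
    have hG : G u i ((i.insertNth ((0 : Fin (m+1) → ℝ) i) y
          + fun j => (((Pi.single i 1 : Fin (m+1) → ℤ) j : ℤ) : ℝ)), t)
        = G u i (i.insertNth ((0 : Fin (m+1) → ℝ) i) y, t) := by
      rw [← spatial_eq hu i _ ht, ← spatial_eq hu i _ ht]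
      exact pd_periodic hper i _ ht _
    rw [hU, hG]
  rw [funext hEq, sub_self]

end Periodic

omit hu in
lemma cont_spatial_int {W : ((Fin n → ℝ) × ℝ) → ℝ} (hW : ContinuousOn W (S n))
    {t₀ : ℝ} (ht₀ : t₀ < 0) :
    ContinuousAt (fun t => ∫ x in Icc (0 : Fin n → ℝ) 1, W (x, t)) t₀ := by
  set ε : ℝ := -t₀ / 2 with hε
  have hεpos : 0 < ε := by simp only [hε]; linarith
  have hQS : (Icc (0 : Fin n → ℝ) 1 ×ˢ Icc (t₀ - ε) (t₀ + ε)) ⊆ S n := by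
    rintro ⟨x, s⟩ ⟨_, hs⟩
    exact mem_S (lt_of_le_of_lt hs.2 (by simp only [hε]; linarith))
  obtain ⟨C, hC⟩ := (isCompact_Icc.prod isCompact_Icc).exists_bound_of_continuousOn
    (hW.mono hQS)
  apply continuousAt_of_dominated (bound := fun _ => C)
  · filter_upwards [Iio_mem_nhds ht₀] with t ht
    have : ContinuousOn (fun x : Fin n → ℝ => W (x, t)) (Icc 0 1) :=
      hW.comp ((continuous_id.prodMk continuous_const).continuousOn)
        (fun x _ => mem_S ht)
    exact this.aestronglyMeasurable measurableSet_Icc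
  · filter_upwards [Ioo_mem_nhds (by linarith : t₀ - ε < t₀) (by linarith : t₀ < t₀ + ε)]
      with t ht
    refine (ae_restrict_iff' measurableSet_Icc).2 (Filter.Eventually.of_forall fun x hx => ?_)
    exact hC (x, t) ⟨hx, ⟨ht.1.le, ht.2.le⟩⟩
  · exact integrableOn_const isCompact_Icc.measure_lt_top.ne
  · refine Filter.Eventually.of_forall fun x => ?_
    exact (hW.continuousAt (isOpen_S.mem_nhds (mem_S ht₀))).comp
      ((Continuous.prodMk_right x).continuousAt)

lemma E_hasDeriv {t₀ : ℝ} (ht₀ : t₀ < 0) :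
    HasDerivAt (fun t => ∫ x in Icc (0 : Fin n → ℝ) 1, (u x t) ^ 2)
      (∫ x in Icc (0 : Fin n → ℝ) 1, 2 * u x t₀ * GT u (x, t₀)) t₀ := by
  set ε : ℝ := -t₀ / 2 with hε
  have hεpos : 0 < ε := by simp only [hε]; linarith
  have hball : ∀ t ∈ Metric.ball t₀ ε, t < 0 := by
    intro t ht
    rw [Metric.mem_ball, Real.dist_eq] at ht
    have := abs_lt.mp ht
    simp only [hε] at this
    linarith [this.1, this.2]
  have hQS : (Icc (0 : Fin n → ℝ) 1 ×ˢ Icc (t₀ - ε) (t₀ + ε)) ⊆ S n := by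
    rintro ⟨x, s⟩ ⟨_, hs⟩
    exact mem_S (lt_of_le_of_lt hs.2 (by simp only [hε]; linarith))
  have hW'c : ContinuousOn (fun q => 2 * UU u q * GT u q) (S n) :=
    (continuousOn_const.mul (hUc hu).continuousOn).mul (hGTc hu)
  obtain ⟨C, hC⟩ := (isCompact_Icc.prod isCompact_Icc).exists_bound_of_continuousOn
    (hW'c.mono hQS)
  have hcx : ∀ {t : ℝ}, t < 0 → Continuous fun x : Fin n → ℝ => u x t := by
    intro t ht
    rw [← continuousOn_univ]
    exact (hUc hu).continuousOn.comp
      ((continuous_id.prodMk continuous_const).continuousOn) (fun x _ => mem_S ht)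
  have hGTx : Continuous fun x : Fin n → ℝ => GT u (x, t₀) := by
    rw [← continuousOn_univ]
    exact (hGTc hu).comp ((continuous_id.prodMk continuous_const).continuousOn)
      (fun x _ => mem_S ht₀)
  refine (hasDerivAt_integral_of_dominated_loc_of_deriv_le
    (F := fun t x => (u x t) ^ 2) (F' := fun t x => 2 * u x t * GT u (x, t))
    (bound := fun _ => C) (Metric.ball_mem_nhds t₀ hεpos) ?_ ?_ ?_ ?_ ?_ ?_).2
  · filter_upwards [Iio_mem_nhds ht₀] with t ht
    exact ((hcx ht).pow 2).aestronglyMeasurable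
  · exact ContinuousOn.integrableOn_compact isCompact_Icc ((hcx ht₀).pow 2).continuousOn
  · exact ((continuous_const.mul (hcx ht₀)).mul hGTx).aestronglyMeasurable
  · refine (ae_restrict_iff' measurableSet_Icc).2 (Filter.Eventually.of_forall fun x hx => ?_)
    intro t ht
    rw [Metric.mem_ball, Real.dist_eq] at ht
    have h2 := abs_lt.mp ht
    exact hC ((x, t)) ⟨hx, ⟨by linarith [h2.1], by linarith [h2.2]⟩⟩
  · exact integrableOn_const isCompact_Icc.measure_lt_top.ne
  · refine Filter.Eventually.of_forall fun x => ?_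
    intro t ht
    have h1 : HasDerivAt (fun s => UU u (x, s)) (GT u (x, t)) t :=
      hasDerivAt_lineT (hUdiff hu (hball t ht))
    have h2 := h1.fun_pow 2
    exact h2.congr_deriv (by simp only [UU]; norm_num)

end
end CarlemanAux


open CarlemanAux

/-- Integrated Carleman estimate with nonlinear error absorbed: if `u : ℝⁿ × (-∞,0) → ℝ`
is twice continuously differentiable, `ℤⁿ`-periodic in space, and satisfies
`(∂ₜu - Δu)² ≤ K(u² + |∇u|²)` pointwise, then for every `α ≥ K + 2` and `T₁ < T₂ < 0`,
`∫_{T₁}^{T₂} ∫_{[0,1]ⁿ} (u² + |∇u|²)e^{-αt} ≤ ∫_{[0,1]ⁿ} u(·,T₁)²e^{-αT₁}`. -/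
theorem carleman_absorbed_estimate (n : ℕ) (hn : 1 ≤ n) (K : ℝ) (hK : 0 < K)
    (u : (Fin n → ℝ) → ℝ → ℝ)
    (hu : ContDiffOn ℝ 2 (fun q : (Fin n → ℝ) × ℝ => u q.1 q.2)
      (Set.univ ×ˢ Set.Iio 0))
    (hper : ∀ (x : Fin n → ℝ) (t : ℝ), t < 0 → ∀ z : Fin n → ℤ,
      u (x + fun i => (z i : ℝ)) t = u x t)
    (hpde : ∀ (x : Fin n → ℝ) (t : ℝ), t < 0 →
      (timeDeriv u x t - spatialLaplacian u x t) ^ 2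
        ≤ K * ((u x t) ^ 2 + spatialGradSq u x t))
    (α : ℝ) (hα : K + 2 ≤ α)
    (T₁ T₂ : ℝ) (hT₁₂ : T₁ < T₂) (hT₂ : T₂ < 0) :
    (∫ t in T₁..T₂, ∫ x in Set.Icc (0 : Fin n → ℝ) 1,
        ((u x t) ^ 2 + spatialGradSq u x t) * Real.exp (-α * t))
      ≤ ∫ x in Set.Icc (0 : Fin n → ℝ) 1, (u x T₁) ^ 2 * Real.exp (-α * T₁) := by
  obtain ⟨m, rfl⟩ : ∃ m, n = m + 1 := ⟨n - 1, (Nat.succ_pred_eq_of_pos hn).symm⟩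
  have hT₁ : T₁ < (0:ℝ) := hT₁₂.trans hT₂
  have hneg : ∀ {t : ℝ}, t ∈ Icc T₁ T₂ → t < 0 := fun ht => lt_of_le_of_lt ht.2 hT₂
  -- generic continuity transfer
  have hcomp : ∀ {W : ((Fin (m+1) → ℝ) × ℝ) → ℝ}, ContinuousOn W (S (m+1)) →
      ∀ {t : ℝ}, t < 0 → Continuous fun x : Fin (m+1) → ℝ => W (x, t) := by
    intro W hW t ht
    rw [← continuousOn_univ]
    exact hW.comp ((continuous_id.prodMk continuous_const).continuousOn)
      fun x _ => mem_S ht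
  have hgrad_eq : ∀ {t : ℝ}, t < 0 → ∀ x,
      spatialGradSq u x t = ∑ i, (G u i (x, t)) ^ 2 := by
    intro t ht x
    exact Finset.sum_congr rfl fun i _ => by rw [spatial_eq hu i x ht]
  have hlap_eq : ∀ {t : ℝ}, t < 0 → ∀ x, spatialLaplacian u x t
      = ∑ i, fderiv ℝ (G u i) (x, t) ((Pi.single i 1 : Fin (m+1) → ℝ), (0:ℝ)) := by
    intro t ht x
    exact Finset.sum_congr rfl fun i _ => by rw [spatial2_eq hu i x ht]
  have hc_u : ∀ {t : ℝ}, t < 0 → Continuous fun x : Fin (m+1) → ℝ => u x t :=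
    fun {t} ht => hcomp (hUc hu).continuousOn ht
  have hc_grad : ∀ {t : ℝ}, t < 0 → Continuous fun x : Fin (m+1) → ℝ =>
      spatialGradSq u x t := by
    intro t ht
    rw [show (fun x : Fin (m+1) → ℝ => spatialGradSq u x t)
        = fun x => ∑ i, (G u i (x, t)) ^ 2 from funext (hgrad_eq ht)]
    exact continuous_finset_sum _ fun i _ => (hcomp (hGsm hu i).continuousOn ht).pow 2
  have hc_lap : ∀ {t : ℝ}, t < 0 → Continuous fun x : Fin (m+1) → ℝ =>
      spatialLaplacian u x t := by
    intro t ht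
    rw [show (fun x : Fin (m+1) → ℝ => spatialLaplacian u x t)
        = fun x => ∑ i, fderiv ℝ (G u i) (x, t) ((Pi.single i 1 : Fin (m+1) → ℝ), (0:ℝ))
        from funext (hlap_eq ht)]
    exact continuous_finset_sum _ fun i _ => hcomp (hHc hu i) ht
  have hc_GT : ∀ {t : ℝ}, t < 0 → Continuous fun x : Fin (m+1) → ℝ => GT u (x, t) :=
    fun {t} ht => hcomp (hGTc hu) ht
  have hint : ∀ {f : (Fin (m+1) → ℝ) → ℝ}, Continuous f →
      IntegrableOn f (Icc (0 : Fin (m+1) → ℝ) 1) :=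
    fun hf => ContinuousOn.integrableOn_compact isCompact_Icc hf.continuousOn
  -- derivative of the weighted energy
  have hBderiv : ∀ t : ℝ, t < 0 →
      HasDerivAt (fun s => (∫ x in Icc (0 : Fin (m+1) → ℝ) 1, (u x s) ^ 2)
          * Real.exp (-α * s))
        (((∫ x in Icc (0 : Fin (m+1) → ℝ) 1, 2 * u x t * GT u (x, t))
            - α * ∫ x in Icc (0 : Fin (m+1) → ℝ) 1, (u x t) ^ 2)
          * Real.exp (-α * t)) t := by
    intro t ht
    have h1 := E_hasDeriv hu ht
    have h2 : HasDerivAt (fun s : ℝ => Real.exp (-α * s)) (Real.exp (-α * t) * -α) t := by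
      simpa using ((hasDerivAt_id t).const_mul (-α)).exp
    have h3 := h1.fun_mul h2
    exact h3.congr_deriv (by ring)
  -- the key differential inequality, integrated in space
  have hkey : ∀ t : ℝ, t ∈ Icc T₁ T₂ →
      ((∫ x in Icc (0 : Fin (m+1) → ℝ) 1, 2 * u x t * GT u (x, t))
          - α * ∫ x in Icc (0 : Fin (m+1) → ℝ) 1, (u x t) ^ 2) * Real.exp (-α * t)
        ≤ -(∫ x in Icc (0 : Fin (m+1) → ℝ) 1,
            ((u x t) ^ 2 + spatialGradSq u x t) * Real.exp (-α * t)) := by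
    intro t ht'
    have ht : t < 0 := hneg ht'
    have hi1 : IntegrableOn (fun x : Fin (m+1) → ℝ => (u x t) ^ 2)
        (Icc (0 : Fin (m+1) → ℝ) 1) volume := hint ((hc_u ht).pow 2)
    have hi2 := hint (hc_grad ht)
    have hi3 := hint ((hc_u ht).mul (hc_lap ht))
    have hi4 : IntegrableOn (fun x : Fin (m+1) → ℝ => 2 * u x t * GT u (x, t))
        (Icc (0 : Fin (m+1) → ℝ) 1) volume :=
      hint ((continuous_const.mul (hc_u ht)).mul (hc_GT ht))
    have hibp := ibp hu hper rfl ht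
    have hpt : ∀ x : Fin (m+1) → ℝ,
        2 * u x t * GT u (x, t) - α * (u x t) ^ 2
          + ((u x t) ^ 2 + spatialGradSq u x t)
          - 2 * (spatialGradSq u x t + u x t * spatialLaplacian u x t) ≤ 0 := by
      intro x
      rw [← time_eq hu x ht]
      have hp := hpde x t ht
      have hg0 : 0 ≤ spatialGradSq u x t := Finset.sum_nonneg fun i _ => sq_nonneg _
      nlinarith [sq_nonneg (K * u x t - (timeDeriv u x t - spatialLaplacian u x t)),
        sq_nonneg (u x t), hK, hα, mul_nonneg (sub_nonneg.2 hα) (sq_nonneg (u x t)),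
        mul_pos hK hK]
    have h0 : (∫ x in Icc (0 : Fin (m+1) → ℝ) 1,
        (2 * u x t * GT u (x, t) - α * (u x t) ^ 2
          + ((u x t) ^ 2 + spatialGradSq u x t)
          - 2 * (spatialGradSq u x t + u x t * spatialLaplacian u x t))) ≤ 0 :=
      setIntegral_nonpos measurableSet_Icc fun x _ => hpt x
    have hsplit : (∫ x in Icc (0 : Fin (m+1) → ℝ) 1,
        (2 * u x t * GT u (x, t) - α * (u x t) ^ 2
          + ((u x t) ^ 2 + spatialGradSq u x t)
          - 2 * (spatialGradSq u x t + u x t * spatialLaplacian u x t)))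
        = ((∫ x in Icc (0 : Fin (m+1) → ℝ) 1, 2 * u x t * GT u (x, t))
            - α * ∫ x in Icc (0 : Fin (m+1) → ℝ) 1, (u x t) ^ 2)
          + ((∫ x in Icc (0 : Fin (m+1) → ℝ) 1, (u x t) ^ 2)
            + ∫ x in Icc (0 : Fin (m+1) → ℝ) 1, spatialGradSq u x t)
          - 2 * ∫ x in Icc (0 : Fin (m+1) → ℝ) 1,
              (spatialGradSq u x t + u x t * spatialLaplacian u x t) := by
      have hA1 : IntegrableOn (fun x : Fin (m+1) → ℝ =>
          2 * u x t * GT u (x, t) - α * (u x t) ^ 2)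
          (Icc (0 : Fin (m+1) → ℝ) 1) volume := hi4.sub (hi1.const_mul α)
      have hA2 : IntegrableOn (fun x : Fin (m+1) → ℝ =>
          (u x t) ^ 2 + spatialGradSq u x t)
          (Icc (0 : Fin (m+1) → ℝ) 1) volume := hi1.add hi2
      have hA3 : IntegrableOn (fun x : Fin (m+1) → ℝ =>
          2 * u x t * GT u (x, t) - α * (u x t) ^ 2
            + ((u x t) ^ 2 + spatialGradSq u x t))
          (Icc (0 : Fin (m+1) → ℝ) 1) volume := hA1.add hA2
      have hA4 : IntegrableOn (fun x : Fin (m+1) → ℝ =>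
          spatialGradSq u x t + u x t * spatialLaplacian u x t)
          (Icc (0 : Fin (m+1) → ℝ) 1) volume := hi2.add hi3
      have hA5 : IntegrableOn (fun x : Fin (m+1) → ℝ =>
          2 * (spatialGradSq u x t + u x t * spatialLaplacian u x t))
          (Icc (0 : Fin (m+1) → ℝ) 1) volume := hA4.const_mul 2
      have hA6 : IntegrableOn (fun x : Fin (m+1) → ℝ => α * (u x t) ^ 2)
          (Icc (0 : Fin (m+1) → ℝ) 1) volume := hi1.const_mul α
      rw [integral_sub hA3 hA5, integral_add hA1 hA2,
        integral_sub hi4 hA6, integral_add hi1 hi2, integral_const_mul, integral_const_mul]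
    rw [hsplit, hibp] at h0
    have hineq : (∫ x in Icc (0 : Fin (m+1) → ℝ) 1, 2 * u x t * GT u (x, t))
        - α * ∫ x in Icc (0 : Fin (m+1) → ℝ) 1, (u x t) ^ 2
        ≤ -((∫ x in Icc (0 : Fin (m+1) → ℝ) 1, (u x t) ^ 2)
            + ∫ x in Icc (0 : Fin (m+1) → ℝ) 1, spatialGradSq u x t) := by linarith
    have hJt : (∫ x in Icc (0 : Fin (m+1) → ℝ) 1,
          ((u x t) ^ 2 + spatialGradSq u x t) * Real.exp (-α * t))
        = ((∫ x in Icc (0 : Fin (m+1) → ℝ) 1, (u x t) ^ 2)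
            + ∫ x in Icc (0 : Fin (m+1) → ℝ) 1, spatialGradSq u x t)
          * Real.exp (-α * t) := by
      rw [integral_mul_const, integral_add hi1 hi2]
    have := mul_le_mul_of_nonneg_right hineq (Real.exp_pos (-α * t)).le
    rw [hJt]
    linarith [this]
  -- continuity, hence interval integrability
  have hexp_c : Continuous fun s : ℝ => Real.exp (-α * s) :=
    Real.continuous_exp.comp (continuous_const.mul continuous_id)
  have hDcont : ContinuousOn (fun t =>
      ((∫ x in Icc (0 : Fin (m+1) → ℝ) 1, 2 * u x t * GT u (x, t))
        - α * ∫ x in Icc (0 : Fin (m+1) → ℝ) 1, (u x t) ^ 2) * Real.exp (-α * t))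
      (Icc T₁ T₂) := by
    intro t ht'
    have ht : t < 0 := hneg ht'
    have hMc : ContinuousAt
        (fun s => ∫ x in Icc (0 : Fin (m+1) → ℝ) 1, 2 * u x s * GT u (x, s)) t :=
      cont_spatial_int (W := fun q => 2 * UU u q * GT u q)
        ((continuousOn_const.mul (hUc hu).continuousOn).mul (hGTc hu)) ht
    have hEc : ContinuousAt (fun s => ∫ x in Icc (0 : Fin (m+1) → ℝ) 1, (u x s) ^ 2) t :=
      cont_spatial_int (W := fun q => (UU u q) ^ 2) ((hUc hu).continuousOn.pow 2) ht
    exact ((hMc.sub (continuousAt_const.mul hEc)).mul hexp_c.continuousAt).continuousWithinAt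
  have hJcont : ContinuousOn (fun t => ∫ x in Icc (0 : Fin (m+1) → ℝ) 1,
      ((u x t) ^ 2 + spatialGradSq u x t) * Real.exp (-α * t)) (Icc T₁ T₂) := by
    intro t ht'
    have ht : t < 0 := hneg ht'
    have hWc : ContinuousOn
        (fun q : (Fin (m+1) → ℝ) × ℝ => (UU u q) ^ 2 + ∑ i, (G u i q) ^ 2) (S (m+1)) :=
      ((hUc hu).continuousOn.pow 2).add
        (continuousOn_finset_sum _ fun i _ => ((hGsm hu i).continuousOn).pow 2)
    have h1 := (cont_spatial_int hWc ht).fun_mul hexp_c.continuousAt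
    refine (h1.congr ?_).continuousWithinAt
    filter_upwards [Iio_mem_nhds ht] with s hs
    rw [integral_mul_const]
    congr 1
    refine setIntegral_congr_fun measurableSet_Icc fun x _ => ?_
    rw [hgrad_eq hs x]
    rfl
  have hJint : IntervalIntegrable (fun t => ∫ x in Icc (0 : Fin (m+1) → ℝ) 1,
      ((u x t) ^ 2 + spatialGradSq u x t) * Real.exp (-α * t)) volume T₁ T₂ := by
    apply ContinuousOn.intervalIntegrable
    rwa [Set.uIcc_of_le hT₁₂.le]
  have hDint : IntervalIntegrable (fun t =>
      ((∫ x in Icc (0 : Fin (m+1) → ℝ) 1, 2 * u x t * GT u (x, t))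
        - α * ∫ x in Icc (0 : Fin (m+1) → ℝ) 1, (u x t) ^ 2) * Real.exp (-α * t))
      volume T₁ T₂ := by
    apply ContinuousOn.intervalIntegrable
    rwa [Set.uIcc_of_le hT₁₂.le]
  have hftc := intervalIntegral.integral_eq_sub_of_hasDerivAt
    (f := fun s => (∫ x in Icc (0 : Fin (m+1) → ℝ) 1, (u x s) ^ 2) * Real.exp (-α * s))
    (fun t ht'' => hBderiv t (by
      rw [Set.uIcc_of_le hT₁₂.le] at ht''
      exact hneg ht'')) hDint
  have hDnegint : IntervalIntegrable (fun t =>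
      -(((∫ x in Icc (0 : Fin (m+1) → ℝ) 1, 2 * u x t * GT u (x, t))
        - α * ∫ x in Icc (0 : Fin (m+1) → ℝ) 1, (u x t) ^ 2) * Real.exp (-α * t)))
      volume T₁ T₂ := hDint.neg
  have hmono := intervalIntegral.integral_mono_on hT₁₂.le hJint hDnegint
    (fun t ht'' => by have := hkey t ht''; linarith)
  rw [intervalIntegral.integral_neg, hftc] at hmono
  beta_reduce at hmono
  have hBT₂ : 0 ≤ (∫ x in Icc (0 : Fin (m+1) → ℝ) 1, (u x T₂) ^ 2) * Real.exp (-α * T₂) :=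
    mul_nonneg (setIntegral_nonneg measurableSet_Icc fun x _ => sq_nonneg _)
      (Real.exp_pos _).le
  have hRHS : (∫ x in Icc (0 : Fin (m+1) → ℝ) 1, (u x T₁) ^ 2 * Real.exp (-α * T₁))
      = (∫ x in Icc (0 : Fin (m+1) → ℝ) 1, (u x T₁) ^ 2) * Real.exp (-α * T₁) :=
    integral_mul_const _ _
  rw [hRHS]
  linarith [hmono, hBT₂]
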